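/- Let q > 1 be a prime power, n > t ≥ s ≥ 2 integers, and let P be a non-trivial vector space partition of F_q^n all of whose members have dimension in {1} ∪ {s, s+1, ..., t}, with m_1 holes (1-dimensional members) and with the total number of members of dimension at least s equal to l·q^s + x for nonnegative integers l, x. Then for every hyperplane H of F_q^n, the number m̂_1 of holes of P contained in H satisfies q·m̂_1 ≡ m_1 + x − 1 (mod q^s). -/

import Mathlib

open Module Set

/-- For a non-trivial vector space partition of `F_q^n` of hole-type `(t,s,m₁)` with
`l·q^s + x` members of dimension at least `s`, the number `m̂₁` of holes in any
hyperplane satisfies `q·m̂₁ ≡ m₁ + x − 1 (mod q^s)`. -/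
theorem stmt_4 (q n t s l x : ℕ) (hq : 1 < q) (F : Type*) [Field F] [Fintype F]
    (hF : Fintype.card F = q) (hnt : t < n) (hts : s ≤ t) (hs : 2 ≤ s)
    (P : Set (Submodule F (Fin n → F)))
    (hP : ∀ v : Fin n → F, v ≠ 0 → ∃! U, U ∈ P ∧ v ∈ U)
    (hP0 : ∀ U ∈ P, U ≠ ⊥)
    (hPnontriv : ∃ U ∈ P, 1 < finrank F U)
    (hdim : ∀ U ∈ P, finrank F U = 1 ∨ (s ≤ finrank F U ∧ finrank F U ≤ t))
    (hcount : {U ∈ P | s ≤ finrank F U}.ncard = l * q ^ s + x)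
    (m1 : ℕ) (hm1 : m1 = {U ∈ P | finrank F U = 1}.ncard)
    (H : Submodule F (Fin n → F)) (hH : finrank F H = n - 1) :
    (q : ℤ) * ({U ∈ P | finrank F U = 1 ∧ U ≤ H}.ncard : ℤ)
      ≡ (m1 : ℤ) + (x : ℤ) - 1 [ZMOD ((q : ℤ) ^ s)] := by
  classical
  have hq0 : 0 < q := by omega
  have hVrank : finrank F (Fin n → F) = n := Module.finrank_fin_fun F
  haveI : Finite (Submodule F (Fin n → F)) :=
    Finite.of_injective (fun U : Submodule F (Fin n → F) => (U : Set (Fin n → F)))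
      SetLike.coe_injective
  have hPfin : P.Finite := Set.toFinite P
  set Pfin : Finset (Submodule F (Fin n → F)) := hPfin.toFinset with hPfin_def
  have hmemP : ∀ U, U ∈ Pfin ↔ U ∈ P := fun U => hPfin.mem_toFinset
  -- cardinality of nonzero vectors of a submodule
  have cardW : ∀ W' : Submodule F (Fin n → F),
      (Finset.univ.filter fun v => v ∈ W' ∧ v ≠ 0).card = q ^ finrank F W' - 1 := by
    intro W'
    have h0 : (0 : Fin n → F) ∈ Finset.univ.filter (fun v => v ∈ W') := by
      simp [W'.zero_mem]
    have h1 : (Finset.univ.filter fun v => v ∈ W' ∧ v ≠ 0)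
        = (Finset.univ.filter fun v => v ∈ W').erase 0 := by
      ext v
      simp only [Finset.mem_filter, Finset.mem_univ, true_and, Finset.mem_erase]
      tauto
    rw [h1, Finset.card_erase_of_mem h0]
    congr 1
    have h2 : (Finset.univ.filter fun v => v ∈ W').card = Fintype.card W' :=
      (Fintype.card_subtype _).symm
    rw [h2, card_eq_pow_finrank (K := F), hF]
  -- partition counting
  have key : ∀ W : Submodule F (Fin n → F),
      (Finset.univ.filter fun v => v ∈ W ∧ v ≠ 0).card
        = ∑ U ∈ Pfin,
            (Finset.univ.filter fun v => v ∈ (U ⊓ W : Submodule F (Fin n → F)) ∧ v ≠ 0).card := by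
    intro W
    set f : (Fin n → F) → Submodule F (Fin n → F) :=
      fun v => if h : v ≠ 0 then (hP v h).choose else ⊥ with hf
    have hfspec : ∀ v (h : v ≠ 0), f v ∈ P ∧ v ∈ f v := by
      intro v h
      simp only [hf, dif_pos h]
      exact (hP v h).choose_spec.1
    have hfuniq : ∀ v (h : v ≠ 0) (U : Submodule F (Fin n → F)), U ∈ P → v ∈ U → f v = U := by
      intro v h U hU hvU
      simp only [hf, dif_pos h]
      exact ((hP v h).choose_spec.2 U ⟨hU, hvU⟩).symm
    rw [Finset.card_eq_sum_card_fiberwise (f := f) (t := Pfin)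
      (fun v hv => by
        have hv' : v ∈ W ∧ v ≠ 0 := by simpa using hv
        exact Finset.mem_coe.2 ((hmemP _).2 (hfspec v hv'.2).1))]
    refine Finset.sum_congr rfl fun U hU => ?_
    congr 1
    ext v
    simp only [Finset.mem_filter, Finset.mem_univ, true_and, Submodule.mem_inf]
    constructor
    · rintro ⟨⟨hvW, hv0⟩, hfv⟩
      exact ⟨⟨hfv ▸ (hfspec v hv0).2, hvW⟩, hv0⟩
    · rintro ⟨⟨hvU, hvW⟩, hv0⟩
      exact ⟨⟨hvW, hv0⟩, hfuniq v hv0 U ((hmemP _).1 hU) hvU⟩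
  -- dimension facts about intersection with H
  have hrank_inf_le : ∀ U : Submodule F (Fin n → F),
      finrank F (U ⊓ H : Submodule F (Fin n → F)) ≤ finrank F U :=
    fun U => Submodule.finrank_mono inf_le_left
  have hrank_inf_ge : ∀ U : Submodule F (Fin n → F),
      finrank F U ≤ finrank F (U ⊓ H : Submodule F (Fin n → F)) + 1 := by
    intro U
    have h1 := Submodule.finrank_sup_add_finrank_inf_eq U H
    have h2 : finrank F (U ⊔ H : Submodule F (Fin n → F)) ≤ n := by
      simpa [hVrank] using Submodule.finrank_le (U ⊔ H)
    omega
  -- the three finsets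
  set Ph : Finset (Submodule F (Fin n → F)) := Pfin.filter (fun U => finrank F U = 1) with hPh
  set Pb : Finset (Submodule F (Fin n → F)) := Pfin.filter (fun U => ¬ finrank F U = 1) with hPb
  set Phh : Finset (Submodule F (Fin n → F)) := Ph.filter (fun U => U ≤ H) with hPhh
  have hsle : ∀ U ∈ Pb, s ≤ finrank F U := by
    intro U hU
    rw [hPb, Finset.mem_filter] at hU
    rcases hdim U ((hmemP _).1 hU.1) with h | h
    · exact absurd h hU.2
    · exact h.1
  -- translate ncard hypotheses
  have hm1' : m1 = Ph.card := by
    rw [hm1]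
    have : {U ∈ P | finrank F U = 1} = ↑Ph := by
      ext U
      simp only [Set.mem_setOf_eq, hPh, Finset.coe_filter, hmemP]
    rw [this, Set.ncard_coe_finset]
  have hPbcard : Pb.card = l * q ^ s + x := by
    rw [← hcount]
    have : {U ∈ P | s ≤ finrank F U} = ↑Pb := by
      ext U
      simp only [Set.mem_setOf_eq, hPb, Finset.coe_filter, hmemP]
      constructor
      · rintro ⟨h1, h2⟩
        exact ⟨h1, by omega⟩
      · rintro ⟨h1, h2⟩
        rcases hdim U h1 with h | h
        · exact absurd h h2
        · exact ⟨h1, h.1⟩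
    rw [this, Set.ncard_coe_finset]
  have hmhat : {U ∈ P | finrank F U = 1 ∧ U ≤ H}.ncard = Phh.card := by
    have : {U ∈ P | finrank F U = 1 ∧ U ≤ H} = ↑Phh := by
      ext U
      simp only [Set.mem_setOf_eq, hPhh, hPh, Finset.coe_filter, Finset.mem_filter, hmemP]
      tauto
    rw [this, Set.ncard_coe_finset]
  -- counting equations in ℕ
  have eq1 : q ^ n - 1 = ∑ U ∈ Pfin, (q ^ finrank F U - 1) := by
    have h := key ⊤
    rw [cardW ⊤] at h
    have htop : finrank F (⊤ : Submodule F (Fin n → F)) = n := by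
      rw [finrank_top, hVrank]
    rw [htop] at h
    rw [h]
    refine Finset.sum_congr rfl fun U _ => ?_
    rw [show (U ⊓ ⊤ : Submodule F (Fin n → F)) = U from inf_top_eq U, cardW U]
  have eq2 : q ^ (n - 1) - 1
      = ∑ U ∈ Pfin, (q ^ finrank F (U ⊓ H : Submodule F (Fin n → F)) - 1) := by
    have h := key H
    rw [cardW H, hH] at h
    rw [h]
    exact Finset.sum_congr rfl fun U _ => cardW _
  -- move to ZMod (q ^ s)
  set R := ZMod (q ^ s) with hR
  have hqs0 : (q : R) ^ s = 0 := by
    have h := ZMod.natCast_self (q ^ s)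
    push_cast at h
    exact h
  have hpow0 : ∀ d : ℕ, s ≤ d → (q : R) ^ d = 0 := by
    intro d hd
    have : (q : R) ^ d = (q : R) ^ s * (q : R) ^ (d - s) := by
      rw [← pow_add]
      congr 1
      omega
    rw [this, hqs0, zero_mul]
  have castterm : ∀ d : ℕ, ((q ^ d - 1 : ℕ) : R) = (q : R) ^ d - 1 := by
    intro d
    rw [Nat.cast_sub (Nat.one_le_pow _ _ hq0)]
    push_cast
    ring
  have eq1R : (q : R) ^ n - 1 = ∑ U ∈ Pfin, ((q : R) ^ finrank F U - 1) := by
    calc (q : R) ^ n - 1 = ((q ^ n - 1 : ℕ) : R) := (castterm n).symm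
      _ = ((∑ U ∈ Pfin, (q ^ finrank F U - 1) : ℕ) : R) := by rw [eq1]
      _ = ∑ U ∈ Pfin, ((q : R) ^ finrank F U - 1) := by
          rw [Nat.cast_sum]
          exact Finset.sum_congr rfl fun U _ => castterm _
  have eq2R : (q : R) ^ (n - 1) - 1
      = ∑ U ∈ Pfin, ((q : R) ^ finrank F (U ⊓ H : Submodule F (Fin n → F)) - 1) := by
    calc (q : R) ^ (n - 1) - 1 = ((q ^ (n - 1) - 1 : ℕ) : R) := (castterm _).symm
      _ = ((∑ U ∈ Pfin, (q ^ finrank F (U ⊓ H : Submodule F (Fin n → F)) - 1) : ℕ) : R) := by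
          rw [eq2]
      _ = _ := by
          rw [Nat.cast_sum]
          exact Finset.sum_congr rfl fun U _ => castterm _
  have hNb : (Pb.card : R) = (x : R) := by
    rw [hPbcard]
    push_cast
    erw [Nat.cast_mul, Nat.cast_pow, hqs0]
    ring
  -- first congruence: m1 * (q - 1) = x - 1 in R
  have hA : (m1 : R) * ((q : R) - 1) = (x : R) - 1 := by
    have hsplit := Finset.sum_filter_add_sum_filter_not Pfin (fun U => finrank F U = 1)
        (fun U => (q : R) ^ finrank F U - 1)
    have h1 : ∑ U ∈ Ph, ((q : R) ^ finrank F U - 1) = (Ph.card : R) * ((q : R) - 1) := by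
      rw [Finset.sum_congr rfl (g := fun _ => (q : R) - 1) fun U hU => by
        rw [(Finset.mem_filter.1 hU).2, pow_one]]
      rw [Finset.sum_const]
      erw [nsmul_eq_mul]
    have h2 : ∑ U ∈ Pb, ((q : R) ^ finrank F U - 1) = -(x : R) := by
      rw [Finset.sum_congr rfl (g := fun _ => (-1 : R)) fun U hU => by
        rw [hpow0 _ (hsle U hU)]; ring]
      rw [Finset.sum_const]
      erw [nsmul_eq_mul, hNb]
      ring
    have hn0 : (q : R) ^ n = 0 := hpow0 n (by omega)
    have e1 := eq1R
    rw [← hsplit, h1, h2, hn0, ← hm1'] at e1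
    linear_combination -e1
  -- second congruence, from the hyperplane count
  have hB : (q : R) * ((Phh.card : R) * ((q : R) - 1)) = (q : R) * ((x : R) - 1) := by
    have hsplit := Finset.sum_filter_add_sum_filter_not Pfin (fun U => finrank F U = 1)
        (fun U => (q : R) ^ finrank F (U ⊓ H : Submodule F (Fin n → F)) - 1)
    have hsplit2 := Finset.sum_filter_add_sum_filter_not Ph (fun U => U ≤ H)
        (fun U => (q : R) ^ finrank F (U ⊓ H : Submodule F (Fin n → F)) - 1)
    have h1 : ∑ U ∈ Phh, ((q : R) ^ finrank F (U ⊓ H : Submodule F (Fin n → F)) - 1)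
        = (Phh.card : R) * ((q : R) - 1) := by
      rw [Finset.sum_congr rfl (g := fun _ => (q : R) - 1) fun U hU => by
        have hU' := Finset.mem_filter.1 hU
        have hle : U ≤ H := hU'.2
        have hr1 : finrank F U = 1 := (Finset.mem_filter.1 hU'.1).2
        rw [inf_eq_left.2 hle, hr1, pow_one]]
      rw [Finset.sum_const, nsmul_eq_mul]
    have h1' : ∑ U ∈ Ph.filter (fun U => ¬ U ≤ H),
        ((q : R) ^ finrank F (U ⊓ H : Submodule F (Fin n → F)) - 1) = 0 := by
      rw [Finset.sum_congr rfl (g := fun _ => (0 : R)) fun U hU => by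
        have hU' := Finset.mem_filter.1 hU
        have hnle : ¬ U ≤ H := hU'.2
        have hr1 : finrank F U = 1 := (Finset.mem_filter.1 hU'.1).2
        have hle1 := hrank_inf_le U
        have hr0 : finrank F (U ⊓ H : Submodule F (Fin n → F)) = 0 := by
          by_contra h0
          have heq : (U ⊓ H : Submodule F (Fin n → F)) = U :=
            Submodule.eq_of_le_of_finrank_le inf_le_left (by omega)
          exact hnle (inf_eq_left.1 heq)
        rw [hr0, pow_zero]; ring]
      exact Finset.sum_const_zero
    have h2 : (q : R) * ∑ U ∈ Pfin.filter (fun U : Submodule F (Fin n → F) => ¬ finrank F U = 1),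
        ((q : R) ^ finrank F (U ⊓ H : Submodule F (Fin n → F)) - 1) = -((q : R) * x) := by
      rw [Finset.mul_sum]
      rw [Finset.sum_congr rfl (g := fun _ => -(q : R)) fun U hU => by
        have hge := hrank_inf_ge U
        have hsU := hsle U hU
        have h0 : (q : R) ^ (finrank F (U ⊓ H : Submodule F (Fin n → F)) + 1) = 0 :=
          hpow0 _ (by omega)
        have : (q : R) * ((q : R) ^ finrank F (U ⊓ H : Submodule F (Fin n → F)) - 1)
            = (q : R) ^ (finrank F (U ⊓ H : Submodule F (Fin n → F)) + 1) - (q : R) := by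
          ring
        rw [this, h0]; ring]
      rw [Finset.sum_const, nsmul_eq_mul]
      rw [show (Pfin.filter (fun U : Submodule F (Fin n → F) => ¬ finrank F U = 1)).card
        = Pb.card from rfl, hNb]
      ring
    have hn1' : (q : R) ^ (n - 1) = 0 := hpow0 (n - 1) (by omega)
    have e2 := eq2R
    rw [← hsplit, ← hsplit2, h1, h1', hn1'] at e2
    linear_combination (-(q : R)) * e2 - h2
  -- the unit (q - 1)
  have hunit : IsUnit ((q : R) - 1) := by
    have hc : ((q - 1 : ℕ) : R) = (q : R) - 1 := by
      rw [Nat.cast_sub hq.le]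
      push_cast
      ring
    have hbase : Nat.Coprime (q - 1) q := by
      have h : Nat.Coprime (q - 1) ((q - 1) + 1) := by
        rw [Nat.coprime_self_add_right]
        exact Nat.coprime_one_right _
      rwa [show q - 1 + 1 = q by omega] at h
    rw [← hc]
    exact (ZMod.isUnit_iff_coprime (q - 1) (q ^ s)).2 (hbase.pow_right s)
  have hkey : ((q : R) - 1) * ((q : R) * (Phh.card : R))
      = ((q : R) - 1) * ((m1 : R) + (x : R) - 1) := by
    linear_combination hB - hA
  have hfinal : (q : R) * (Phh.card : R) = (m1 : R) + (x : R) - 1 :=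
    hunit.mul_left_cancel hkey
  -- convert back to the integer congruence
  rw [hmhat]
  have hmod : ((q : ℤ) ^ s) = ((q ^ s : ℕ) : ℤ) := by push_cast; ring
  rw [hmod, ← ZMod.intCast_eq_intCast_iff]
  push_cast
  exact hfinal
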